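/- (Asymptotic equivalence of the HC objective and the proxy separation at the optimal threshold.) In the ARW model with parameters 1/2 < β < 1 and ρ*(β) < r < 1, let W(t) = (Ḡ(t) − Ψ̄(t))/√(G(t)·Ḡ(t)) with G(t) = (1−ε_p)(Φ(t)−Φ(−t)) + ε_p(Φ(t−τ_p)−Φ(−t−τ_p)) and Ḡ = 1 − G. Then at t = t_p(q*(r,β)), W(t) · √(TPR(t)+FPR(t)) / TPR(t) → 1 as p → ∞, where TPR and FPR are computed with ε = ε_p, τ = τ_p. -/

import Mathlib

open Filter Set MeasureTheory

noncomputable def gaussPDF (t : ℝ) : ℝ := (Real.sqrt (2 * Real.pi))⁻¹ * Real.exp (-(t ^ 2) / 2)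

/-- standard normal CDF Φ -/
noncomputable def normCDF (t : ℝ) : ℝ := ∫ x in Set.Iic t, gaussPDF x

/-- survival function of |N(τ,1)| -/
noncomputable def psiBar (τ t : ℝ) : ℝ := (1 - normCDF (t - τ)) + normCDF (-t - τ)

noncomputable def tprFn (ε τ t : ℝ) : ℝ := ε * psiBar τ t

noncomputable def fprFn (ε t : ℝ) : ℝ := (1 - ε) * psiBar 0 t

noncomputable def idrFn (ε τ t : ℝ) : ℝ := ε * normCDF (-t - τ)

/-- clipping proxy separation -/
noncomputable def sepFn (ε τ t : ℝ) : ℝ :=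
  2 * τ * (tprFn ε τ t - 2 * idrFn ε τ t) / Real.sqrt (tprFn ε τ t + fprFn ε t)

/-- proxy false discovery rate -/
noncomputable def fdrFn (ε τ t : ℝ) : ℝ := fprFn ε t / (tprFn ε τ t + fprFn ε t)

/-- magnitude of derivative of TPR -/
noncomputable def tprD (ε τ t : ℝ) : ℝ := ε * (gaussPDF (t - τ) + gaussPDF (t + τ))

/-- magnitude of derivative of FPR -/
noncomputable def fprD (ε t : ℝ) : ℝ := 2 * (1 - ε) * gaussPDF t

/-- proxy local false discovery rate -/
noncomputable def lfdrFn (ε τ t : ℝ) : ℝ := fprD ε t / (tprD ε τ t + fprD ε t)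

noncomputable def rhoStar (β : ℝ) : ℝ :=
  if β ≤ 1 / 2 then 0 else if β ≤ 3 / 4 then β - 1 / 2 else (1 - Real.sqrt (1 - β)) ^ 2

noncomputable def qStar (r β : ℝ) : ℝ := if r ≤ β / 3 then 4 * r else (β + r) ^ 2 / (4 * r)

/-- sparsity ε_p = p^{-β} in the ARW model -/
noncomputable def epsP (β : ℝ) (p : ℕ) : ℝ := (p : ℝ) ^ (-β)

/-- strength τ_p = √(2 r log p) in the ARW model -/
noncomputable def tauP (r : ℝ) (p : ℕ) : ℝ := Real.sqrt (2 * r * Real.log p)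

/-- threshold t_p(q) = √(2 q log p) -/
noncomputable def tP (q : ℝ) (p : ℕ) : ℝ := Real.sqrt (2 * q * Real.log p)

/-- folded two-point mixture G_{ε,τ} -/
noncomputable def gMix (ε τ t : ℝ) : ℝ :=
  (1 - ε) * (normCDF t - normCDF (-t)) + ε * (normCDF (t - τ) - normCDF (-t - τ))

/-- ideal HC objective -/
noncomputable def hcObj (ε τ t : ℝ) : ℝ :=
  ((1 - gMix ε τ t) - psiBar 0 t) / Real.sqrt (gMix ε τ t * (1 - gMix ε τ t))

/-- useful feature discovery exponent δ(q) -/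
noncomputable def deltaExp (β r q : ℝ) : ℝ :=
  if q ≤ r then 1 - β else 1 - β - (Real.sqrt q - Real.sqrt r) ^ 2

/-- separation growth exponent γ(q) -/
noncomputable def gammaExp (β r q : ℝ) : ℝ :=
  deltaExp β r q - max (1 - q) (deltaExp β r q) / 2

lemma gaussPDF_eq (t : ℝ) : gaussPDF t = (Real.sqrt (2 * Real.pi))⁻¹ * Real.exp (-(1/2) * t ^ 2) := by
  unfold gaussPDF; congr 2; ring

lemma gaussPDF_pos (t : ℝ) : 0 < gaussPDF t := by
  unfold gaussPDF
  positivity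

lemma integrable_gaussPDF : Integrable gaussPDF := by
  have : gaussPDF = fun t => (Real.sqrt (2 * Real.pi))⁻¹ * Real.exp (-(1/2) * t ^ 2) := by
    funext t; exact gaussPDF_eq t
  rw [this]
  exact (integrable_exp_neg_mul_sq (by norm_num : (0:ℝ) < 1/2)).const_mul _

lemma integral_gaussPDF : ∫ x, gaussPDF x = 1 := by
  simp_rw [gaussPDF_eq]
  rw [MeasureTheory.integral_const_mul, integral_gaussian]
  rw [show Real.pi / (1/2) = 2 * Real.pi by ring]
  rw [inv_mul_cancel₀]
  positivity

lemma gaussPDF_anti {a b : ℝ} (ha : 0 ≤ a) (hab : a ≤ b) : gaussPDF b ≤ gaussPDF a := by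
  unfold gaussPDF
  have : Real.exp (-(b^2)/2) ≤ Real.exp (-(a^2)/2) := Real.exp_le_exp.2 (by nlinarith)
  have h0 : (0:ℝ) ≤ (Real.sqrt (2 * Real.pi))⁻¹ := by positivity
  exact mul_le_mul_of_nonneg_left this h0

lemma normCDF_mono {a b : ℝ} (h : a ≤ b) : normCDF a ≤ normCDF b := by
  apply MeasureTheory.setIntegral_mono_set integrable_gaussPDF.integrableOn
  · exact Filter.Eventually.of_forall fun x => (gaussPDF_pos x).le
  · exact HasSubset.Subset.eventuallyLE (Iic_subset_Iic.2 h)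

lemma normCDF_nonneg (t : ℝ) : 0 ≤ normCDF t :=
  MeasureTheory.setIntegral_nonneg measurableSet_Iic fun x _ => (gaussPDF_pos x).le

lemma survival_eq (t : ℝ) : 1 - normCDF t = ∫ x in Ioi t, gaussPDF x := by
  have := intervalIntegral.integral_Iic_add_Ioi (f := gaussPDF) (b := t) (μ := volume)
    integrable_gaussPDF.integrableOn integrable_gaussPDF.integrableOn
  rw [integral_gaussPDF] at this
  unfold normCDF
  linarith

lemma survival_nonneg (t : ℝ) : 0 ≤ ∫ x in Ioi t, gaussPDF x :=
  MeasureTheory.setIntegral_nonneg measurableSet_Ioi fun x _ => (gaussPDF_pos x).le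

lemma normCDF_le_one (t : ℝ) : normCDF t ≤ 1 := by
  have h := survival_eq t
  have := survival_nonneg t
  linarith

lemma normCDF_neg (t : ℝ) : normCDF (-t) = ∫ x in Ioi t, gaussPDF x := by
  unfold normCDF
  rw [← integral_comp_neg_Ioi]
  congr 1
  funext x
  unfold gaussPDF
  congr 2
  ring

lemma integrable_mul_gaussPDF : Integrable (fun x => x * gaussPDF x) := by
  have : (fun x => x * gaussPDF x) = fun x => (Real.sqrt (2 * Real.pi))⁻¹ * (x * Real.exp (-(1/2) * x^2)) := by
    funext x; rw [gaussPDF_eq]; ring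
  rw [this]
  exact (integrable_mul_exp_neg_mul_sq (by norm_num : (0:ℝ) < 1/2)).const_mul _

lemma integral_mul_gaussPDF (t : ℝ) : ∫ x in Ioi t, x * gaussPDF x = gaussPDF t := by
  have hderiv : ∀ x ∈ Ici t, HasDerivAt (fun y => -gaussPDF y) (x * gaussPDF x) x := by
    intro x _
    have h : HasDerivAt (fun y : ℝ => -(y^2)/2) (-x) x := by
      have := ((hasDerivAt_pow 2 x).div_const 2).neg
      have e : (fun y : ℝ => -(y^2)/2) = -fun x => x ^ 2 / 2 := by
        funext y; simp only [Pi.neg_apply]; ring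
      rw [e]
      refine this.congr_deriv ?_
      norm_num
    have h2 := (h.exp).const_mul (Real.sqrt (2 * Real.pi))⁻¹
    have h3 := h2.neg
    exact h3.congr_deriv (by unfold gaussPDF; ring)
  have htend : Tendsto (fun y => -gaussPDF y) atTop (nhds 0) := by
    rw [show (0:ℝ) = -0 by norm_num]
    apply Tendsto.neg
    have h : Tendsto (fun y : ℝ => -(y^2)/2) atTop atBot := by
      apply Filter.Tendsto.atBot_div_const (by norm_num : (0:ℝ) < 2)
      exact tendsto_neg_atTop_atBot.comp (tendsto_pow_atTop two_ne_zero)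
    have h2 := (Real.tendsto_exp_atBot.comp h).const_mul (Real.sqrt (2 * Real.pi))⁻¹
    simp only [Function.comp, mul_zero] at h2
    have : gaussPDF = fun y : ℝ => (Real.sqrt (2 * Real.pi))⁻¹ * Real.exp (-(y^2)/2) := rfl
    rw [this]
    exact h2
  have := MeasureTheory.integral_Ioi_of_hasDerivAt_of_tendsto'
    (fun x hx => hderiv x hx) integrable_mul_gaussPDF.integrableOn htend
  rw [this]; ring

lemma mills_upper {t : ℝ} (ht : 0 < t) : ∫ x in Ioi t, gaussPDF x ≤ gaussPDF t / t := by
  have h1 : ∫ x in Ioi t, gaussPDF x ≤ ∫ x in Ioi t, (x/t) * gaussPDF x := by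
    apply MeasureTheory.setIntegral_mono_on integrable_gaussPDF.integrableOn
    · have : (fun x => (x/t) * gaussPDF x) = fun x => (1/t) * (x * gaussPDF x) := by
        funext x; ring
      rw [this]
      exact (integrable_mul_gaussPDF.const_mul _).integrableOn
    · exact measurableSet_Ioi
    · intro x hx
      have hx' : t ≤ x := le_of_lt hx
      have h : (1:ℝ) ≤ x / t := (one_le_div ht).2 hx'
      nlinarith [gaussPDF_pos x]
  have h2 : ∫ x in Ioi t, (x/t) * gaussPDF x = (1/t) * ∫ x in Ioi t, x * gaussPDF x := by
    rw [← MeasureTheory.integral_const_mul]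
    congr 1; funext x; ring
  rw [h2, integral_mul_gaussPDF] at h1
  have e : (1/t) * gaussPDF t = gaussPDF t / t := by ring
  linarith [h1, e]

lemma survival_lower (x : ℝ) : gaussPDF (|x| + 1) ≤ ∫ y in Ioi x, gaussPDF y := by
  have key : ∀ a : ℝ, 0 ≤ a → gaussPDF (a + 1) ≤ ∫ y in Ioi a, gaussPDF y := by
    intro a ha
    have h1 : ∫ y in Ioc a (a+1), gaussPDF y ≤ ∫ y in Ioi a, gaussPDF y := by
      apply MeasureTheory.setIntegral_mono_set integrable_gaussPDF.integrableOn
      · exact Filter.Eventually.of_forall fun y => (gaussPDF_pos y).le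
      · exact HasSubset.Subset.eventuallyLE Ioc_subset_Ioi_self
    have h2 : gaussPDF (a+1) ≤ ∫ y in Ioc a (a+1), gaussPDF y := by
      have hconst : ∫ _y in Ioc a (a+1), gaussPDF (a+1) ∂(volume) = gaussPDF (a+1) := by
        rw [MeasureTheory.setIntegral_const]
        rw [Real.volume_real_Ioc]
        norm_num
      rw [← hconst]
      apply MeasureTheory.setIntegral_mono_on
      · exact integrableOn_const measure_Ioc_lt_top.ne
      · exact integrable_gaussPDF.integrableOn
      · exact measurableSet_Ioc
      · intro y hy
        exact gaussPDF_anti (by linarith [ha, hy.1]) hy.2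
    linarith
  rcases le_or_gt 0 x with hx | hx
  · rw [abs_of_nonneg hx]; exact key x hx
  · have h0 := key 0 le_rfl
    have hmono : ∫ y in Ioi (0:ℝ), gaussPDF y ≤ ∫ y in Ioi x, gaussPDF y := by
      apply MeasureTheory.setIntegral_mono_set integrable_gaussPDF.integrableOn
      · exact Filter.Eventually.of_forall fun y => (gaussPDF_pos y).le
      · exact HasSubset.Subset.eventuallyLE (Ioi_subset_Ioi hx.le)
    have hanti : gaussPDF (|x| + 1) ≤ gaussPDF (0 + 1) :=
      gaussPDF_anti (by norm_num) (by simp)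
    linarith

lemma gaussPDF_tendsto : Tendsto gaussPDF atTop (nhds 0) := by
  have h : Tendsto (fun y : ℝ => -(y^2)/2) atTop atBot := by
    apply Filter.Tendsto.atBot_div_const (by norm_num : (0:ℝ) < 2)
    exact tendsto_neg_atTop_atBot.comp (tendsto_pow_atTop two_ne_zero)
  have h2 := (Real.tendsto_exp_atBot.comp h).const_mul (Real.sqrt (2 * Real.pi))⁻¹
  simp only [Function.comp, mul_zero] at h2
  exact h2

lemma real_sqrt_tendsto_atTop : Tendsto Real.sqrt atTop atTop := by
  rw [tendsto_atTop]
  intro b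
  filter_upwards [eventually_ge_atTop (b^2 ⊔ 0)] with x hx
  calc b ≤ |b| := le_abs_self b
  _ = Real.sqrt (b^2) := (Real.sqrt_sq_eq_abs b).symm
  _ ≤ Real.sqrt x := Real.sqrt_le_sqrt (le_trans (le_max_left _ _) hx)

lemma gaussPDF_div (a b : ℝ) : gaussPDF a / gaussPDF b = Real.exp ((b^2 - a^2)/2) := by
  unfold gaussPDF
  rw [mul_div_mul_left _ _ (by positivity : (Real.sqrt (2*Real.pi))⁻¹ ≠ 0)]
  rw [← Real.exp_sub]
  congr 1
  ring

lemma psiBar_nonneg (τ t : ℝ) : 0 ≤ psiBar τ t := by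
  unfold psiBar
  have := normCDF_le_one (t - τ)
  have := normCDF_nonneg (-t - τ)
  linarith

lemma psiBar_le_two (τ t : ℝ) : psiBar τ t ≤ 2 := by
  unfold psiBar
  have := normCDF_nonneg (t - τ)
  have := normCDF_le_one (-t - τ)
  linarith

lemma psiBar_zero_le {t : ℝ} (ht : 0 < t) : psiBar 0 t ≤ 2 * (gaussPDF t / t) := by
  unfold psiBar
  rw [sub_zero, show -t - 0 = -t by ring]
  have h1 : 1 - normCDF t = ∫ x in Ioi t, gaussPDF x := survival_eq t
  have h2 : normCDF (-t) = ∫ x in Ioi t, gaussPDF x := normCDF_neg t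
  have h3 := mills_upper ht
  linarith

lemma psiBar_ge (τ t : ℝ) : gaussPDF (|t - τ| + 1) ≤ psiBar τ t := by
  unfold psiBar
  have h1 : 1 - normCDF (t - τ) = ∫ x in Ioi (t - τ), gaussPDF x := survival_eq _
  have h2 := survival_lower (t - τ)
  have h3 := normCDF_nonneg (-t - τ)
  linarith

lemma psiBar_pos (τ t : ℝ) : 0 < psiBar τ t :=
  lt_of_lt_of_le (gaussPDF_pos _) (psiBar_ge τ t)

lemma one_sub_gMix (ε τ t : ℝ) : 1 - gMix ε τ t = tprFn ε τ t + fprFn ε t := by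
  unfold gMix tprFn fprFn psiBar
  ring

lemma algebra_step (ε τ t : ℝ) (hG : 0 < gMix ε τ t) (hε : 0 < ε) (hε1 : ε < 1) :
    hcObj ε τ t * Real.sqrt (tprFn ε τ t + fprFn ε t) / tprFn ε τ t
      = (1 - psiBar 0 t / psiBar τ t) / Real.sqrt (gMix ε τ t) := by
  have hΨτ := psiBar_pos τ t
  have hΨ := psiBar_nonneg 0 t
  have hApos : 0 < tprFn ε τ t := mul_pos hε hΨτ
  have hB : 0 ≤ fprFn ε t := mul_nonneg (by linarith) hΨ
  have hABpos : 0 < tprFn ε τ t + fprFn ε t := by linarith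
  have hnum : (1 - gMix ε τ t) - psiBar 0 t = ε * psiBar τ t - ε * psiBar 0 t := by
    rw [one_sub_gMix]; unfold tprFn fprFn; ring
  unfold hcObj
  rw [hnum, one_sub_gMix, Real.sqrt_mul hG.le]
  have hsG : 0 < Real.sqrt (gMix ε τ t) := Real.sqrt_pos.2 hG
  have hsAB : 0 < Real.sqrt (tprFn ε τ t + fprFn ε t) := Real.sqrt_pos.2 hABpos
  have hA : tprFn ε τ t = ε * psiBar τ t := rfl
  rw [hA]
  field_simp


set_option maxHeartbeats 1000000 in
/-- Asymptotic equivalence of the HC objective and TPR/√(TPR+FPR) at t_p(q*). -/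
theorem stmt7 (β r : ℝ) (hβ1 : 1 / 2 < β) (hβ2 : β < 1)
    (hr1 : rhoStar β < r) (hr2 : r < 1) :
    Filter.Tendsto
      (fun p : ℕ =>
        hcObj (epsP β p) (tauP r p) (tP (qStar r β) p) *
            Real.sqrt (tprFn (epsP β p) (tauP r p) (tP (qStar r β) p)
              + fprFn (epsP β p) (tP (qStar r β) p)) /
          tprFn (epsP β p) (tauP r p) (tP (qStar r β) p))
      Filter.atTop (nhds 1) := by
  -- basic parameter facts
  have hrho : 0 ≤ rhoStar β := by
    unfold rhoStar
    split_ifs with h1 h2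
    · exact le_rfl
    · linarith
    · positivity
  have hr0 : 0 < r := lt_of_le_of_lt hrho hr1
  set q := qStar r β with hqdef
  have hq0 : 0 < q := by
    rw [hqdef]; unfold qStar
    split_ifs with h
    · linarith
    · exact div_pos (pow_pos (by linarith) 2) (by linarith)
  have h4q : r < 4 * q := by
    rw [hqdef]; unfold qStar
    split_ifs with h
    · linarith
    · rw [show (4:ℝ) * ((β + r)^2/(4*r)) = (β + r)^2/r from by field_simp]
      rw [lt_div_iff₀ hr0]
      nlinarith
  set c : ℝ := 2 * Real.sqrt (q * r) - r with hcdef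
  have hc0 : 0 < c := by
    have h1 : r / 2 < Real.sqrt (q * r) := by
      rw [Real.lt_sqrt (by linarith)]
      nlinarith
    rw [hcdef]; linarith
  set d : ℝ := Real.sqrt (2 * q) + Real.sqrt (2 * r) with hddef
  have hd0 : 0 ≤ d := by rw [hddef]; positivity
  -- limits of building blocks
  have hL : Tendsto (fun p : ℕ => Real.log p) atTop atTop :=
    Real.tendsto_log_atTop.comp tendsto_natCast_atTop_atTop
  have ht_top : Tendsto (fun p : ℕ => tP q p) atTop atTop := by
    apply real_sqrt_tendsto_atTop.comp
    exact Tendsto.const_mul_atTop (by linarith) hL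
  have hε0 : Tendsto (fun p : ℕ => epsP β p) atTop (nhds 0) :=
    (tendsto_rpow_neg_atTop (by linarith : (0:ℝ) < β)).comp tendsto_natCast_atTop_atTop
  have hφ0 : Tendsto (fun p : ℕ => gaussPDF (tP q p)) atTop (nhds 0) :=
    gaussPDF_tendsto.comp ht_top
  -- A + B → 0
  have hABnonneg : ∀ p : ℕ, 1 ≤ p → 0 ≤ tprFn (epsP β p) (tauP r p) (tP q p) + fprFn (epsP β p) (tP q p) := by
    intro p hp
    have hεpos : 0 < epsP β p := Real.rpow_pos_of_pos (by exact_mod_cast hp) _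
    have hεle : epsP β p ≤ 1 := by
      unfold epsP
      rcases eq_or_lt_of_le (show (1:ℝ) ≤ (p:ℝ) by exact_mod_cast hp) with h | h
      · rw [← h]; simp
      · exact (Real.rpow_lt_one_of_one_lt_of_neg h (by linarith)).le
    have := psiBar_nonneg (tauP r p) (tP q p)
    have := psiBar_nonneg 0 (tP q p)
    unfold tprFn fprFn
    have : 0 ≤ (1 - epsP β p) := by linarith
    positivity
  have hAB0 : Tendsto (fun p : ℕ =>
      tprFn (epsP β p) (tauP r p) (tP q p) + fprFn (epsP β p) (tP q p)) atTop (nhds 0) := by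
    apply tendsto_of_tendsto_of_tendsto_of_le_of_le' tendsto_const_nhds
      (show Tendsto (fun p : ℕ => 2 * epsP β p + 2 * gaussPDF (tP q p)) atTop (nhds 0) by
        have := (hε0.const_mul 2).add (hφ0.const_mul 2)
        simpa using this)
    · filter_upwards [eventually_ge_atTop 1] with p hp
      exact hABnonneg p hp
    · filter_upwards [ht_top.eventually_ge_atTop 1, eventually_ge_atTop 1] with p htp hp
      have htpos : (0:ℝ) < tP q p := by linarith
      have hεpos : 0 < epsP β p := Real.rpow_pos_of_pos (by exact_mod_cast hp) _
      have hεle : epsP β p ≤ 1 := by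
        unfold epsP
        rcases eq_or_lt_of_le (show (1:ℝ) ≤ (p:ℝ) by exact_mod_cast hp) with h | h
        · rw [← h]; simp
        · exact (Real.rpow_lt_one_of_one_lt_of_neg h (by linarith)).le
      have hA : tprFn (epsP β p) (tauP r p) (tP q p) ≤ 2 * epsP β p := by
        unfold tprFn
        have h2 := psiBar_le_two (tauP r p) (tP q p)
        nlinarith [psiBar_nonneg (tauP r p) (tP q p)]
      have hB : fprFn (epsP β p) (tP q p) ≤ 2 * gaussPDF (tP q p) := by
        unfold fprFn
        have h1 : psiBar 0 (tP q p) ≤ 2 * (gaussPDF (tP q p) / tP q p) := psiBar_zero_le htpos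
        have h2 : gaussPDF (tP q p) / tP q p ≤ gaussPDF (tP q p) := by
          rw [div_le_iff₀ htpos]
          nlinarith [gaussPDF_pos (tP q p)]
        nlinarith [psiBar_nonneg 0 (tP q p)]
      linarith
  -- G → 1
  have hG : Tendsto (fun p : ℕ => gMix (epsP β p) (tauP r p) (tP q p)) atTop (nhds 1) := by
    have h := ((tendsto_const_nhds : Tendsto (fun _ : ℕ => (1:ℝ)) atTop (nhds 1)).sub hAB0)
    rw [sub_zero] at h
    apply h.congr
    intro p
    have := one_sub_gMix (epsP β p) (tauP r p) (tP q p)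
    linarith
  -- R → 0
  have hR : Tendsto (fun p : ℕ =>
      psiBar 0 (tP q p) / psiBar (tauP r p) (tP q p)) atTop (nhds 0) := by
    -- exponent tends to -∞
    have hE : Tendsto (fun p : ℕ =>
        ((|tP q p - tauP r p| + 1)^2 - (tP q p)^2)/2) atTop atBot := by
      apply tendsto_atBot_mono' atTop
        (f₁ := fun p : ℕ => (-(c/2) * Real.log p + 1/2))
      · filter_upwards [hL.eventually_ge_atTop (max 1 ((2*d/c)^2))] with p hLp
        set L := Real.log p with hLdef
        have hL1 : (1:ℝ) ≤ L := le_trans (le_max_left _ _) hLp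
        have hL0 : (0:ℝ) ≤ L := by linarith
        have hsL : 2*d/c ≤ Real.sqrt L := by
          rw [show 2*d/c = Real.sqrt ((2*d/c)^2) from
            (Real.sqrt_sq (by positivity)).symm]
          exact Real.sqrt_le_sqrt (le_trans (le_max_right _ _) hLp)
        have hdL : d * Real.sqrt L ≤ (c/2) * L := by
          have h1 : d ≤ (c/2) * Real.sqrt L := by
            rw [div_le_iff₀ hc0] at hsL
            nlinarith
          have h2 : 0 ≤ Real.sqrt L := Real.sqrt_nonneg L
          nlinarith [Real.mul_self_sqrt hL0]
        have htt : tP q p = Real.sqrt (2*q) * Real.sqrt L := by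
          unfold tP; rw [← Real.sqrt_mul (by linarith)]
        have hττ : tauP r p = Real.sqrt (2*r) * Real.sqrt L := by
          unfold tauP; rw [← Real.sqrt_mul (by linarith)]
        have htt2 : (tP q p)^2 = 2*q*L := by
          unfold tP; exact Real.sq_sqrt (by nlinarith)
        have hτ2 : (tauP r p)^2 = 2*r*L := by
          unfold tauP; exact Real.sq_sqrt (by nlinarith)
        have httn : 0 ≤ tP q p := Real.sqrt_nonneg _
        have hτn : 0 ≤ tauP r p := Real.sqrt_nonneg _
        have hprod : tP q p * tauP r p = 2 * Real.sqrt (q*r) * L := by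
          unfold tP tauP
          rw [← Real.sqrt_mul (by nlinarith)]
          rw [show 2*q*L*(2*r*L) = (2*L)^2 * (q*r) by ring]
          rw [Real.sqrt_mul (sq_nonneg _), Real.sqrt_sq (by linarith)]
          ring
        have habs : |tP q p - tauP r p| ≤ tP q p + tauP r p := by
          calc |tP q p - tauP r p| ≤ |tP q p| + |tauP r p| := abs_sub _ _
          _ = tP q p + tauP r p := by rw [abs_of_nonneg httn, abs_of_nonneg hτn]
        have hsq : (|tP q p - tauP r p| + 1)^2 = (tP q p - tauP r p)^2 + 2*|tP q p - tauP r p| + 1 := by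
          rw [add_sq, sq_abs]; ring
        have habs0 : 0 ≤ |tP q p - tauP r p| := abs_nonneg _
        -- combine
        rw [hsq]
        have hexpand : (tP q p - tauP r p)^2 = (tP q p)^2 - 2*(tP q p * tauP r p) + (tauP r p)^2 := by ring
        rw [hexpand, htt2, hτ2, hprod]
        have hd_eq : tP q p + tauP r p = d * Real.sqrt L := by
          rw [htt, hττ, hddef]; ring
        have hstep : 2*|tP q p - tauP r p| ≤ 2 * (d * Real.sqrt L) := by
          rw [← hd_eq]; linarith
        have hcL : c * L = 2 * Real.sqrt (q*r) * L - r * L := by rw [hcdef]; ring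
        nlinarith [hdL]
      · apply tendsto_atBot_add_const_right
        exact Tendsto.const_mul_atTop_of_neg (by linarith : -(c/2) < 0) hL
    have hexp : Tendsto (fun p : ℕ =>
        2 * Real.exp (((|tP q p - tauP r p| + 1)^2 - (tP q p)^2)/2)) atTop (nhds 0) := by
      have := (Real.tendsto_exp_atBot.comp hE).const_mul 2
      simpa using this
    apply tendsto_of_tendsto_of_tendsto_of_le_of_le' tendsto_const_nhds hexp
    · filter_upwards with p
      exact div_nonneg (psiBar_nonneg 0 _) (psiBar_pos _ _).le
    · filter_upwards [ht_top.eventually_ge_atTop 1] with p htp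
      have htpos : (0:ℝ) < tP q p := by linarith
      have hΨτ := psiBar_pos (tauP r p) (tP q p)
      have hΨle : psiBar 0 (tP q p) ≤ 2 * gaussPDF (tP q p) := by
        have h1 := psiBar_zero_le htpos
        have h2 : gaussPDF (tP q p) / tP q p ≤ gaussPDF (tP q p) := by
          rw [div_le_iff₀ htpos]
          nlinarith [gaussPDF_pos (tP q p)]
        linarith
      have hΨτge := psiBar_ge (tauP r p) (tP q p)
      have hgpos := gaussPDF_pos (|tP q p - tauP r p| + 1)
      calc psiBar 0 (tP q p) / psiBar (tauP r p) (tP q p)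
          ≤ 2 * gaussPDF (tP q p) / gaussPDF (|tP q p - tauP r p| + 1) := by
            apply div_le_div₀ (by nlinarith [gaussPDF_pos (tP q p)]) hΨle hgpos hΨτge
      _ = 2 * (gaussPDF (tP q p) / gaussPDF (|tP q p - tauP r p| + 1)) := by ring
      _ = 2 * Real.exp (((|tP q p - tauP r p| + 1)^2 - (tP q p)^2)/2) := by
            rw [gaussPDF_div]
  -- eventual equality with the simplified expression
  have hev : ∀ᶠ p : ℕ in atTop,
      hcObj (epsP β p) (tauP r p) (tP q p) *
          Real.sqrt (tprFn (epsP β p) (tauP r p) (tP q p) + fprFn (epsP β p) (tP q p)) /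
        tprFn (epsP β p) (tauP r p) (tP q p)
      = (1 - psiBar 0 (tP q p) / psiBar (tauP r p) (tP q p)) /
          Real.sqrt (gMix (epsP β p) (tauP r p) (tP q p)) := by
    filter_upwards [eventually_ge_atTop 2,
      hG.eventually (eventually_gt_nhds (show (0:ℝ) < 1 by norm_num))] with p hp hGp
    have hp1 : (1:ℝ) < (p:ℝ) := by exact_mod_cast Nat.lt_of_lt_of_le one_lt_two hp
    have hεpos : 0 < epsP β p := Real.rpow_pos_of_pos (by linarith) _
    have hεlt : epsP β p < 1 := Real.rpow_lt_one_of_one_lt_of_neg hp1 (by linarith)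
    exact algebra_step _ _ _ hGp hεpos hεlt
  -- conclude
  have hfinal : Tendsto (fun p : ℕ =>
      (1 - psiBar 0 (tP q p) / psiBar (tauP r p) (tP q p)) /
        Real.sqrt (gMix (epsP β p) (tauP r p) (tP q p))) atTop (nhds 1) := by
    have hnum : Tendsto (fun p : ℕ =>
        1 - psiBar 0 (tP q p) / psiBar (tauP r p) (tP q p)) atTop (nhds 1) := by
      have := ((tendsto_const_nhds : Tendsto (fun _ : ℕ => (1:ℝ)) atTop (nhds 1)).sub hR)
      simpa using this
    have hden : Tendsto (fun p : ℕ =>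
        Real.sqrt (gMix (epsP β p) (tauP r p) (tP q p))) atTop (nhds 1) := by
      have := hG.sqrt
      simpa using this
    have := hnum.div hden one_ne_zero
    rw [div_one] at this
    exact this
  exact hfinal.congr' (EventuallyEq.symm hev)
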